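/- Per-layer energy equality. Let ρ, g be constants with ρ > 0. Let h_α, h, p_S, z_b, G_{α−1/2}, G_{α+1/2} : ℝ×ℝ² → ℝ and u_{α−1}, u_α, u_{α+1}, K_{α−1/2}, K_{α+1/2} : ℝ×ℝ² → ℝ² be continuously differentiable. Assume that at every point the mass equation ∂_t h_α + div(h_α u_α) = G_{α+1/2} − G_{α−1/2} and the momentum equation in velocity form ρ h_α ∂_t u_α + ρ h_α (u_α·∇)u_α + h_α ∇p_S + ρ g h_α ∇(z_b + h) = K_{α−1/2} − K_{α+1/2} + (ρ/2) G_{α+1/2}(u_{α+1} − u_α) + (ρ/2) G_{α−1/2}(u_α − u_{α−1}) hold. Then, with E_α := h_α(|u_α|²/2 + p_S/ρ + g(z_b + h/2)), at every point: ρ ∂_t E_α + (ρ g/2)(h ∂_t h_α − h_α ∂_t h) + ρ div((E_α + g h_α h/2) u_α) = u_α·(K_{α−1/2} − K_{α+1/2}) + h_α ∂_t(p_S + ρ g z_b) + G_{α+1/2}(ρ u_{α+1}·u_α/2 + p_S + ρ g(z_b + h)) − G_{α−1/2}(ρ u_α·u_{α−1}/2 + p_S + ρ g(z_b + h)). -/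

import Mathlib

/-- Partial derivative in time (first coordinate of `ℝ × ℝ × ℝ`). -/
noncomputable def pt (f : ℝ × ℝ × ℝ → ℝ) (p : ℝ × ℝ × ℝ) : ℝ := fderiv ℝ f p (1, 0, 0)

/-- Partial derivative in the first spatial coordinate. -/
noncomputable def px (f : ℝ × ℝ × ℝ → ℝ) (p : ℝ × ℝ × ℝ) : ℝ := fderiv ℝ f p (0, 1, 0)

/-- Partial derivative in the second spatial coordinate. -/
noncomputable def py (f : ℝ × ℝ × ℝ → ℝ) (p : ℝ × ℝ × ℝ) : ℝ := fderiv ℝ f p (0, 0, 1)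

/-- Spatial divergence of a planar vector field. -/
noncomputable def div2 (v : ℝ × ℝ × ℝ → ℝ × ℝ) (p : ℝ × ℝ × ℝ) : ℝ :=
  px (fun q => (v q).1) p + py (fun q => (v q).2) p

/-- Spatial gradient of a scalar field. -/
noncomputable def grad2 (f : ℝ × ℝ × ℝ → ℝ) (p : ℝ × ℝ × ℝ) : ℝ × ℝ := (px f p, py f p)

/-- Componentwise time derivative of a planar vector field. -/
noncomputable def ptv (v : ℝ × ℝ × ℝ → ℝ × ℝ) (p : ℝ × ℝ × ℝ) : ℝ × ℝ :=
  (pt (fun q => (v q).1) p, pt (fun q => (v q).2) p)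

/-- Convective derivative `(u·∇)v`. -/
noncomputable def conv (u v : ℝ × ℝ × ℝ → ℝ × ℝ) (p : ℝ × ℝ × ℝ) : ℝ × ℝ :=
  ((u p).1 * px (fun q => (v q).1) p + (u p).2 * py (fun q => (v q).1) p,
   (u p).1 * px (fun q => (v q).2) p + (u p).2 * py (fun q => (v q).2) p)

/-- Euclidean dot product on `ℝ²`. -/
def dot2 (a b : ℝ × ℝ) : ℝ := a.1 * b.1 + a.2 * b.2

/-- Euclidean norm on `ℝ²`. -/
noncomputable def eunorm (a : ℝ × ℝ) : ℝ := Real.sqrt (a.1 ^ 2 + a.2 ^ 2)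


lemma fd_add (f g : ℝ×ℝ×ℝ → ℝ) (p v : ℝ×ℝ×ℝ) (hf : DifferentiableAt ℝ f p) (hg : DifferentiableAt ℝ g p) :
    fderiv ℝ (fun q => f q + g q) p v = fderiv ℝ f p v + fderiv ℝ g p v := by
  rw [fderiv_fun_add hf hg]; rfl

lemma fd_mul (f g : ℝ×ℝ×ℝ → ℝ) (p v : ℝ×ℝ×ℝ) (hf : DifferentiableAt ℝ f p) (hg : DifferentiableAt ℝ g p) :
    fderiv ℝ (fun q => f q * g q) p v = f p * fderiv ℝ g p v + g p * fderiv ℝ f p v := by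
  rw [fderiv_fun_mul hf hg]; simp

lemma fd_const_mul (c : ℝ) (f : ℝ×ℝ×ℝ → ℝ) (p v : ℝ×ℝ×ℝ) (hf : DifferentiableAt ℝ f p) :
    fderiv ℝ (fun q => c * f q) p v = c * fderiv ℝ f p v := by
  rw [fderiv_const_mul hf]; simp

lemma fd_mul_const (c : ℝ) (f : ℝ×ℝ×ℝ → ℝ) (p v : ℝ×ℝ×ℝ) (hf : DifferentiableAt ℝ f p) :
    fderiv ℝ (fun q => f q * c) p v = fderiv ℝ f p v * c := by
  rw [fderiv_mul_const hf]; simp [mul_comm]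

/-- Per-layer energy equality for the multilayer shallow model. -/
theorem layer_energy_equality
    (ρ g : ℝ) (hρ : 0 < ρ)
    (hα h pS zb Gm Gp : ℝ × ℝ × ℝ → ℝ)
    (um uα up Km Kp : ℝ × ℝ × ℝ → ℝ × ℝ)
    -- regularity assumptions
    (hα_smooth : ContDiff ℝ 1 hα) (h_smooth : ContDiff ℝ 1 h)
    (pS_smooth : ContDiff ℝ 1 pS) (zb_smooth : ContDiff ℝ 1 zb)
    (Gm_smooth : ContDiff ℝ 1 Gm) (Gp_smooth : ContDiff ℝ 1 Gp)
    (um_smooth : ContDiff ℝ 1 um) (uα_smooth : ContDiff ℝ 1 uα)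
    (up_smooth : ContDiff ℝ 1 up)
    (Km_smooth : ContDiff ℝ 1 Km) (Kp_smooth : ContDiff ℝ 1 Kp)
    -- energy of the layer
    (E : ℝ × ℝ × ℝ → ℝ)
    (E_def : ∀ p, E p =
      hα p * ((eunorm (uα p)) ^ 2 / 2 + pS p / ρ + g * (zb p + h p / 2)))
    -- governing equations
    (mass_eq : ∀ p,
      pt hα p + div2 (fun q => hα q • uα q) p = Gp p - Gm p)
    (mom_eq : ∀ p,
      (ρ * hα p) • ptv uα p + (ρ * hα p) • conv uα uα p
        + hα p • grad2 pS p + (ρ * g * hα p) • grad2 (fun q => zb q + h q) p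
      = Km p - Kp p
        + (ρ / 2 * Gp p) • (up p - uα p)
        + (ρ / 2 * Gm p) • (uα p - um p)) :
    ∀ p,
      ρ * pt E p + ρ * g / 2 * (h p * pt hα p - hα p * pt h p)
        + ρ * div2 (fun q => (E q + g * hα q * h q / 2) • uα q) p
      = dot2 (uα p) (Km p - Kp p) + hα p * pt (fun q => pS q + ρ * g * zb q) p
        + Gp p * (ρ * dot2 (up p) (uα p) / 2 + pS p + ρ * g * (zb p + h p))
        - Gm p * (ρ * dot2 (uα p) (um p) / 2 + pS p + ρ * g * (zb p + h p)) := by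
  
  intro p
  have dhα := hα_smooth.differentiable one_ne_zero
  have dh := h_smooth.differentiable one_ne_zero
  have dpS := pS_smooth.differentiable one_ne_zero
  have dzb := zb_smooth.differentiable one_ne_zero
  have duα := uα_smooth.differentiable one_ne_zero
  have hEf : E = fun q => hα q * (((uα q).1 * (uα q).1 + (uα q).2 * (uα q).2) / 2
      + pS q / ρ + g * (zb q + h q / 2)) := by
    funext q
    rw [E_def q, eunorm, Real.sq_sqrt (by positivity)]
    ring
  have hm := mass_eq p
  have hmm := mom_eq p
  rw [Prod.ext_iff] at hmm
  obtain ⟨h1, h2⟩ := hmm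
  rw [hEf]
  simp only [pt, px, py, div2, grad2, ptv, conv, dot2, Prod.smul_fst, Prod.smul_snd,
    smul_eq_mul, Prod.fst_add, Prod.snd_add, Prod.fst_sub, Prod.snd_sub,
    div_eq_mul_inv] at hm h1 h2 ⊢
  simp (disch := fun_prop) only [fd_add, fd_mul, fd_const_mul, fd_mul_const,
    fderiv_fun_const, Pi.zero_apply, ContinuousLinearMap.zero_apply, mul_zero, zero_mul, add_zero,
    zero_add] at hm h1 h2 ⊢
  linear_combination
    (ρ * (((uα p).1 * (uα p).1 + (uα p).2 * (uα p).2) / 2 + pS p * ρ⁻¹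
      + g * (zb p + h p))) * hm
    + (uα p).1 * h1 + (uα p).2 * h2
    + (hα p * ((fderiv ℝ pS p) (1,0,0) + (uα p).1 * (fderiv ℝ pS p) (0,1,0)
        + (uα p).2 * (fderiv ℝ pS p) (0,0,1)) + pS p * (Gp p - Gm p))
      * (mul_inv_cancel₀ hρ.ne' : ρ * ρ⁻¹ = 1)
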